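/- Assume b−1 ∈ A. Then for every integer k ≥ 0 and every complex s with Re s > log N / log b, the tail mass identity μ_s([1−b^{−k},1)) = b^{−ks} · b^s/(b^s−N) holds; explicitly, Σ_{l=0}^∞ Σ over those (a_1,…,a_l) ∈ A^l with a_1/b + ⋯ + a_l/b^l ≥ 1 − b^{−k} of b^{−ls} equals b^{−ks} · b^s/(b^s − N), where for l = 0 the empty tuple has value 0 and contributes 1 if and only if k = 0. -/

import Mathlib

open Finset

noncomputable section

/-- The rational point a₁/b + ⋯ + a_l/b^l attached to a digit tuple. -/
def digitVal (b l : ℕ) (a : Fin l → ℕ) : ℝ :=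
  ∑ i : Fin l, (a i : ℝ) / (b : ℝ) ^ ((i : ℕ) + 1)

/-- The finset of digit tuples of length l with entries in A. -/
def tuples (A : Finset ℕ) (l : ℕ) : Finset (Fin l → ℕ) :=
  Fintype.piFinset fun _ => A

lemma geomsum (b : ℕ) (hb : 2 ≤ b) (l : ℕ) :
    ∑ i ∈ range l, ((b:ℝ) - 1) / (b:ℝ)^(i+1) = 1 - ((b:ℝ)^l)⁻¹ := by
  have hb0 : (0:ℝ) < b := by positivity
  induction l with
  | zero => simp
  | succ n ih =>
    rw [Finset.sum_range_succ, ih]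
    have h1 : (b:ℝ)^n ≠ 0 := by positivity
    have h2 : (b:ℝ)^(n+1) ≠ 0 := by positivity
    field_simp
    ring

lemma cast_le_sub (b : ℕ) (hb : 2 ≤ b) {m : ℕ} (h : m ≤ b - 1) : (m:ℝ) ≤ (b:ℝ) - 1 := by
  have : ((m:ℕ):ℝ) ≤ ((b-1:ℕ):ℝ) := Nat.cast_le.2 h
  rwa [Nat.cast_sub (by omega), Nat.cast_one] at this

lemma digit_le (b : ℕ) (hb : 2 ≤ b) {l : ℕ} {a : Fin l → ℕ} (ha : ∀ i, a i ≤ b - 1) :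
    digitVal b l a ≤ 1 - ((b:ℝ)^l)⁻¹ := by
  have hb0 : (0:ℝ) < b := by positivity
  calc digitVal b l a ≤ ∑ i : Fin l, ((b:ℝ) - 1) / (b:ℝ)^((i:ℕ)+1) := by
        apply Finset.sum_le_sum
        intro i _
        gcongr
        exact cast_le_sub b hb (ha i)
    _ = 1 - ((b:ℝ)^l)⁻¹ := by
        rw [Fin.sum_univ_eq_sum_range (fun i => ((b:ℝ)-1)/(b:ℝ)^(i+1)) l, geomsum b hb l]

lemma digit_lt (b : ℕ) (hb : 2 ≤ b) {l : ℕ} {a : Fin l → ℕ} (ha : ∀ i, a i ≤ b - 1)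
    {j : Fin l} (hj : a j < b - 1) :
    digitVal b l a ≤ 1 - ((b:ℝ)^l)⁻¹ - ((b:ℝ)^((j:ℕ)+1))⁻¹ := by
  have hb0 : (0:ℝ) < b := by positivity
  have key : ((b:ℝ)^((j:ℕ)+1))⁻¹ ≤ ∑ i : Fin l, (((b:ℝ) - 1) - (a i : ℝ)) / (b:ℝ)^((i:ℕ)+1) := by
    have hsingle : (((b:ℝ) - 1) - (a j : ℝ)) / (b:ℝ)^((j:ℕ)+1)
        ≤ ∑ i : Fin l, (((b:ℝ) - 1) - (a i : ℝ)) / (b:ℝ)^((i:ℕ)+1) := by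
      apply Finset.single_le_sum (f := fun i : Fin l => (((b:ℝ) - 1) - (a i : ℝ)) / (b:ℝ)^((i:ℕ)+1))
        _ (mem_univ j)
      intro i _
      have h := cast_le_sub b hb (ha i)
      apply div_nonneg (by linarith) (by positivity)
    refine le_trans ?_ hsingle
    have h1 : (1:ℝ) ≤ ((b:ℝ) - 1) - (a j : ℝ) := by
      have : (a j : ℝ) ≤ (b:ℝ) - 2 := by
        have : ((a j : ℕ):ℝ) ≤ ((b-2:ℕ):ℝ) := Nat.cast_le.2 (by omega)
        rwa [Nat.cast_sub (by omega), Nat.cast_ofNat] at this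
      linarith
    rw [div_eq_mul_inv]
    nlinarith [inv_pos.2 (pow_pos hb0 ((j:ℕ)+1))]
  have hsum : ∑ i : Fin l, (((b:ℝ) - 1) - (a i : ℝ)) / (b:ℝ)^((i:ℕ)+1)
      = (1 - ((b:ℝ)^l)⁻¹) - digitVal b l a := by
    have : ∀ i : Fin l, ((b:ℝ) - 1 - (a i:ℝ)) / (b:ℝ)^((i:ℕ)+1)
        = ((b:ℝ)-1)/(b:ℝ)^((i:ℕ)+1) - (a i:ℝ)/(b:ℝ)^((i:ℕ)+1) := fun i => sub_div _ _ _
    rw [Finset.sum_congr rfl (fun i _ => this i), Finset.sum_sub_distrib, digitVal,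
      Fin.sum_univ_eq_sum_range (fun i => ((b:ℝ)-1)/(b:ℝ)^(i+1)) l, geomsum b hb l]
  rw [hsum] at key
  linarith

lemma digit_ge (b : ℕ) (hb : 2 ≤ b) {k l : ℕ} (hk : k ≤ l) {a : Fin l → ℕ}
    (ha : ∀ i : Fin l, (i:ℕ) < k → a i = b - 1) :
    1 - ((b:ℝ)^k)⁻¹ ≤ digitVal b l a := by
  have hb0 : (0:ℝ) < b := by positivity
  have step1 : ∑ i : Fin l, (if (i:ℕ) < k then ((b:ℝ)-1)/(b:ℝ)^((i:ℕ)+1) else 0)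
      ≤ digitVal b l a := by
    apply Finset.sum_le_sum
    intro i _
    by_cases h : (i:ℕ) < k
    · rw [if_pos h, ha i h, Nat.cast_sub (by omega), Nat.cast_one]
    · rw [if_neg h]; positivity
  have step2 : ∑ i : Fin l, (if (i:ℕ) < k then ((b:ℝ)-1)/(b:ℝ)^((i:ℕ)+1) else 0)
      = 1 - ((b:ℝ)^k)⁻¹ := by
    rw [Fin.sum_univ_eq_sum_range (fun i => if i < k then ((b:ℝ)-1)/(b:ℝ)^(i+1) else 0) l,
      ← Finset.sum_filter]
    have hf : (range l).filter (fun i => i < k) = range k := by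
      ext i; simp only [mem_filter, mem_range]; omega
    rw [hf, geomsum b hb k]
  linarith

lemma card_filter_tuples (b : ℕ) (hb : 2 ≤ b) (A : Finset ℕ) (hAb : A ⊆ Finset.range b)
    (hbA : b - 1 ∈ A) (k l : ℕ) :
    ((tuples A l).filter (fun a => 1 - (b:ℝ)^(-(k:ℤ)) ≤ digitVal b l a)).card
      = if k ≤ l then A.card ^ (l - k) else 0 := by
  have hb0 : (0:ℝ) < b := by positivity
  have hb1 : (1:ℝ) < b := by exact_mod_cast hb.trans_lt' one_lt_two
  have hzpow : (b:ℝ)^(-(k:ℤ)) = ((b:ℝ)^k)⁻¹ := by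
    rw [zpow_neg, zpow_natCast]
  have hmem : ∀ {a : Fin l → ℕ}, a ∈ tuples A l → ∀ i, a i ≤ b - 1 := by
    intro a haT i
    have := hAb (Fintype.mem_piFinset.1 haT i)
    simp only [Finset.mem_range] at this
    omega
  by_cases hkl : k ≤ l
  · rw [if_pos hkl]
    have hset : (tuples A l).filter (fun a => 1 - (b:ℝ)^(-(k:ℤ)) ≤ digitVal b l a)
        = Fintype.piFinset (fun i : Fin l => if (i:ℕ) < k then {b-1} else A) := by
      ext a
      simp only [Finset.mem_filter, Fintype.mem_piFinset, hzpow]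
      constructor
      · rintro ⟨haT, hle⟩
        intro i
        by_cases h : (i:ℕ) < k
        · rw [if_pos h, Finset.mem_singleton]
          by_contra hne
          have hlt : a i < b - 1 := lt_of_le_of_ne (hmem haT i) hne
          have := digit_lt b hb (hmem haT) hlt
          have h1 : ((b:ℝ)^k)⁻¹ ≤ ((b:ℝ)^((i:ℕ)+1))⁻¹ := by
            apply inv_anti₀ (by positivity)
            exact pow_le_pow_right₀ (le_of_lt hb1) (by omega)
          have h2 : (0:ℝ) < ((b:ℝ)^l)⁻¹ := by positivity
          linarith
        · rw [if_neg h]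
          exact Fintype.mem_piFinset.1 haT i
      · intro hpi
        have haT : a ∈ tuples A l := by
          apply Fintype.mem_piFinset.2
          intro i
          have := hpi i
          by_cases h : (i:ℕ) < k
          · rw [if_pos h, Finset.mem_singleton] at this; rw [this]; exact hbA
          · rwa [if_neg h] at this
        refine ⟨haT, ?_⟩
        apply digit_ge b hb hkl
        intro i hik
        have := hpi i
        rwa [if_pos hik, Finset.mem_singleton] at this
    rw [hset, Fintype.card_piFinset]
    have : ∀ i : Fin l, (if (i:ℕ) < k then ({b-1} : Finset ℕ) else A).card
        = if (i:ℕ) < k then 1 else A.card := by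
      intro i; by_cases h : (i:ℕ) < k <;> simp [h]
    rw [Finset.prod_congr rfl (fun i _ => this i),
      Fin.prod_univ_eq_prod_range (fun i => if i < k then 1 else A.card) l,
      Finset.prod_ite]
    simp only [Finset.prod_const, one_pow, one_mul]
    congr 1
    have : (range l).filter (fun i => ¬ i < k) = Finset.Ico k l := by
      ext i; simp only [mem_filter, mem_range, Finset.mem_Ico]; omega
    rw [this, Nat.card_Ico]
  · rw [if_neg hkl]
    rw [Finset.card_eq_zero, Finset.filter_eq_empty_iff]
    intro a haT
    push_neg
    have h1 := digit_le b hb (hmem haT)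
    have h2 : ((b:ℝ)^l)⁻¹ > ((b:ℝ)^k)⁻¹ := by
      apply inv_strictAnti₀ (by positivity)
      exact pow_lt_pow_right₀ hb1 (by omega)
    rw [hzpow]
    linarith


/-- Assume b−1 ∈ A.  For every k ≥ 0 and Re s > log N / log b, the
tail mass of μ_s satisfies μ_s([1−b^{−k},1)) = b^{−ks}·b^s/(b^s−N). -/
theorem tail_mass_identity
    (b : ℕ) (hb : 2 ≤ b) (A : Finset ℕ) (hA : A.Nonempty) (hAb : A ⊆ Finset.range b)
    (hbA : b - 1 ∈ A)
    (s : ℂ) (hs : Real.log A.card / Real.log b < s.re) (k : ℕ) :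
    ∑' l : ℕ, ∑ a ∈ (tuples A l).filter (fun a => 1 - (b : ℝ) ^ (-(k : ℤ)) ≤ digitVal b l a),
        (b : ℂ) ^ (-(l : ℂ) * s)
      = (b : ℂ) ^ (-(k : ℂ) * s) * (b : ℂ) ^ s / ((b : ℂ) ^ s - (A.card : ℂ)) := by
  set N := A.card with hN
  have hN1 : 1 ≤ N := hA.card_pos
  have hbR : (1:ℝ) < b := by exact_mod_cast hb.trans_lt' one_lt_two
  have hb0 : (0:ℝ) < b := by linarith
  have hlogb : 0 < Real.log b := Real.log_pos hbR
  -- N < b ^ s.re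
  have hNlt : (N:ℝ) < (b:ℝ) ^ s.re := by
    rw [Real.lt_rpow_iff_log_lt (by exact_mod_cast hN1) hb0]
    rw [div_lt_iff₀ hlogb] at hs
    linarith
  have hnorm : ‖(b:ℂ) ^ s‖ = (b:ℝ) ^ s.re := by
    rw [← Complex.ofReal_natCast,
      Complex.norm_cpow_eq_rpow_re_of_pos hb0]
  have hrpos : (0:ℝ) < (b:ℝ) ^ s.re := Real.rpow_pos_of_pos hb0 _
  have hbs_ne : (b:ℂ) ^ s ≠ 0 := by
    rw [← norm_ne_zero_iff, hnorm]; exact ne_of_gt hrpos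
  have hne : (b:ℂ) ^ s - (N:ℂ) ≠ 0 := by
    intro h
    have heq : (b:ℂ) ^ s = (N:ℂ) := sub_eq_zero.1 h
    have : ‖(b:ℂ) ^ s‖ = (N:ℝ) := by rw [heq]; simp
    rw [hnorm] at this
    linarith
  have hr : ‖(N:ℂ) * ((b:ℂ) ^ s)⁻¹‖ < 1 := by
    rw [norm_mul, norm_inv, hnorm]
    simp only [Complex.norm_natCast]
    rw [← div_eq_mul_inv, div_lt_one hrpos]
    exact hNlt
  -- per-term evaluation
  have hterm : ∀ l : ℕ,
      (∑ a ∈ (tuples A l).filter (fun a => 1 - (b : ℝ) ^ (-(k : ℤ)) ≤ digitVal b l a),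
        (b : ℂ) ^ (-(l : ℂ) * s))
      = (if k ≤ l then (N:ℂ) ^ (l - k) else 0) * (((b:ℂ) ^ s)⁻¹) ^ l := by
    intro l
    rw [Finset.sum_const, card_filter_tuples b hb A hAb hbA k l, nsmul_eq_mul]
    congr 1
    · push_cast [apply_ite (fun n : ℕ => (n:ℂ))]
      rfl
    · rw [show (-(l:ℂ) * s) = (l:ℕ) * (-s) by push_cast; ring, Complex.cpow_nat_mul,
        Complex.cpow_neg]
  rw [tsum_congr hterm]
  -- reindex l = m + k
  have hinj : Function.Injective (fun m : ℕ => m + k) := add_left_injective k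
  have hsupp : Function.support (fun l : ℕ =>
      (if k ≤ l then (N:ℂ) ^ (l - k) else 0) * (((b:ℂ) ^ s)⁻¹) ^ l)
      ⊆ Set.range (fun m : ℕ => m + k) := by
    intro l hl
    by_cases h : k ≤ l
    · exact ⟨l - k, by simpa using Nat.sub_add_cancel h⟩
    · simp [h] at hl
  rw [← hinj.tsum_eq hsupp]
  have hsimp : ∀ m : ℕ,
      (if k ≤ m + k then (N:ℂ) ^ (m + k - k) else 0) * (((b:ℂ) ^ s)⁻¹) ^ (m + k)
      = (((b:ℂ) ^ s)⁻¹) ^ k * ((N:ℂ) * ((b:ℂ) ^ s)⁻¹) ^ m := by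
    intro m
    rw [if_pos (Nat.le_add_left k m), Nat.add_sub_cancel, pow_add, mul_pow]
    ring
  rw [tsum_congr hsimp, tsum_mul_left, tsum_geometric_of_norm_lt_one hr]
  have hck : (b:ℂ) ^ (-(k:ℂ) * s) = (((b:ℂ) ^ s)⁻¹) ^ k := by
    rw [show (-(k:ℂ) * s) = (k:ℕ) * (-s) by push_cast; ring, Complex.cpow_nat_mul,
      Complex.cpow_neg]
  rw [hck]
  have h1 : (1 : ℂ) - (N:ℂ) * ((b:ℂ) ^ s)⁻¹ ≠ 0 := by
    intro h
    apply hne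
    have h2 := sub_eq_zero.1 h
    field_simp at h2
    rw [sub_eq_zero, h2]
  field_simp
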